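/- Let m, λ ∈ ℝ and let h : ℝ → ℝ be a twice continuously differentiable 2π-periodic function satisfying the normalization ∫₀^{2π} e^{h(x)} dx = 2π and the equation h''(x) = m·e^{2h(x)} + λ·e^{h(x)} for all x. Then either h is identically zero (in which case λ = −m), or there exist a positive integer n and a real number x₀ such that m = −n², λ > n², and e^{h(x)} = n² / ( λ + √(λ² − n⁴)·cos(n(x − x₀)) ) for all x. In particular, if m is not of the form −n² for any positive integer n, then the only such solution is h ≡ 0. -/

import Mathlib

open Real

lemma const_of_hasDerivAt_zero {f : ℝ → ℝ} (hf : ∀ x, HasDerivAt f 0 x) (x : ℝ) :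
    f x = f 0 :=
  is_const_of_deriv_eq_zero (fun y => (hf y).differentiableAt) (fun y => (hf y).deriv) x 0

lemma periodic_deriv' (f : ℝ → ℝ) {T : ℝ} (hf : Function.Periodic f T) :
    Function.Periodic (deriv f) T := by
  intro x
  have h1 : deriv (fun y => f (y + T)) x = deriv f (x + T) := by
    simpa using deriv_comp_add_const f T x
  have h2 : (fun y => f (y + T)) = f := funext hf
  rw [← h1, h2]

lemma exp_ode {f : ℝ → ℝ} {r : ℝ} (hf : ∀ x, HasDerivAt f (r * f x) x) (x : ℝ) :
    f x = f 0 * Real.exp (r * x) := by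
  have key : ∀ y, HasDerivAt (fun t => f t * Real.exp (-(r * t))) 0 y := by
    intro y
    have hlin : HasDerivAt (fun t : ℝ => -(r * t)) (-r) y := by
      simpa using ((hasDerivAt_id y).const_mul r).fun_neg
    have h1 : HasDerivAt (fun t => Real.exp (-(r * t))) (Real.exp (-(r*y)) * (-r)) y :=
      hlin.exp
    have := (hf y).mul h1
    refine this.congr_deriv (Eq.symm ?_)
    ring
  have h0 : f x * Real.exp (-(r * x)) = f 0 := by
    simpa using const_of_hasDerivAt_zero key x
  have hne := Real.exp_ne_zero (r * x)
  rw [Real.exp_neg] at h0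
  field_simp at h0
  linarith

lemma cos_kt (k t : ℝ) : HasDerivAt (fun s => Real.cos (k * s)) (-(k * Real.sin (k * t))) t := by
  have hlin : HasDerivAt (fun s : ℝ => k * s) k t := by
    simpa using (hasDerivAt_id t).const_mul k
  simpa [mul_comm] using hlin.cos

lemma sin_kt (k t : ℝ) : HasDerivAt (fun s => Real.sin (k * s)) (k * Real.cos (k * t)) t := by
  have hlin : HasDerivAt (fun s : ℝ => k * s) k t := by
    simpa using (hasDerivAt_id t).const_mul k
  simpa [mul_comm] using hlin.sin

lemma harmonic_ode {v v1 : ℝ → ℝ} {k : ℝ} (hk : 0 < k)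
    (hv : ∀ x, HasDerivAt v (v1 x) x) (hv1 : ∀ x, HasDerivAt v1 (-(k^2) * v x) x) (x : ℝ) :
    v x = v 0 * Real.cos (k * x) + (v1 0 / k) * Real.sin (k * x) := by
  set g : ℝ → ℝ := fun t => v t - (v 0 * Real.cos (k*t) + (v1 0 / k) * Real.sin (k*t)) with hgdef
  set g1 : ℝ → ℝ := fun t => v1 t - (-(v 0 * k) * Real.sin (k*t) + v1 0 * Real.cos (k*t)) with hg1def
  have hkne : k ≠ 0 := ne_of_gt hk
  have hg : ∀ t, HasDerivAt g (g1 t) t := by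
    intro t
    have := (hv t).sub (((cos_kt k t).const_mul (v 0)).add ((sin_kt k t).const_mul (v1 0 / k)))
    refine this.congr_deriv (Eq.symm ?_)
    field_simp
    ring
  have hg1 : ∀ t, HasDerivAt g1 (-(k^2) * g t) t := by
    intro t
    have := (hv1 t).sub (((sin_kt k t).const_mul (-(v 0 * k))).add ((cos_kt k t).const_mul (v1 0)))
    refine this.congr_deriv (Eq.symm ?_)
    simp only [hgdef]
    field_simp
    ring
  have hE : ∀ t, HasDerivAt (fun t => g1 t ^ 2 + k^2 * g t ^ 2) 0 t := by
    intro t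
    have := ((hg1 t).pow 2).add (((hg t).pow 2).const_mul (k^2))
    refine this.congr_deriv (Eq.symm ?_)
    ring
  have hE0 : g1 x ^ 2 + k^2 * g x ^ 2 = 0 := by
    have := const_of_hasDerivAt_zero hE x
    have hg0 : g 0 = 0 := by simp [hgdef]
    have hg10 : g1 0 = 0 := by simp [hg1def]
    rw [this, hg0, hg10]
    ring
  have hk2 : 0 < k^2 := by positivity
  have hgx2 : g x ^ 2 = 0 := by nlinarith [sq_nonneg (g1 x), sq_nonneg (g x)]
  have : g x = 0 := by
    have := sq_eq_zero_iff.mp hgx2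
    exact this
  simp only [hgdef] at this
  linarith

lemma key_alg (a b c s t : ℝ) (hs : s^2 = 1 - t^2) (hc2 : c^2 = a^2 - b^2)
    (h1 : 0 < a + b*t) (h2 : 0 < a + c + b*t) (hc0 : 0 < c) :
    (1 + (-2) * (1 / (1 + (b*s/(a+c+b*t))^2) *
      ((b*t*(a+c+b*t) - b*s*(-(b*s)))/(a+c+b*t)^2)))/c = (a+b*t)⁻¹ := by
  have hD : (a+c+b*t) ≠ 0 := ne_of_gt h2
  have h1' : (a+b*t) ≠ 0 := ne_of_gt h1
  have hcne : c ≠ 0 := ne_of_gt hc0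
  have hQ : 1 + (b*s/(a+c+b*t))^2 = ((a+c+b*t)^2 + b^2*s^2)/(a+c+b*t)^2 := by
    field_simp
  have hQpos : (0:ℝ) < (a+c+b*t)^2 + b^2*s^2 := by positivity
  have hQne : ((a+c+b*t)^2 + b^2*s^2) ≠ 0 := ne_of_gt hQpos
  rw [hQ]
  have e1 : 1 / (((a+c+b*t)^2 + b^2*s^2)/(a+c+b*t)^2) * ((b*t*(a+c+b*t) - b*s*(-(b*s)))/(a+c+b*t)^2)
      = (b*t*(a+c+b*t) - b*s*(-(b*s)))/((a+c+b*t)^2 + b^2*s^2) := by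
    field_simp
  rw [e1]
  have e2 : 1 + (-2) * ((b*t*(a+c+b*t) - b*s*(-(b*s)))/((a+c+b*t)^2 + b^2*s^2))
      = (((a+c+b*t)^2 + b^2*s^2) - 2*(b*t*(a+c+b*t) - b*s*(-(b*s))))/((a+c+b*t)^2 + b^2*s^2) := by
    field_simp
    ring
  rw [e2, div_div, inv_eq_one_div, div_eq_div_iff (by positivity) h1']
  linear_combination (-(b^2)*(a+c+b*t)) * hs + (-(a+c+b*t)) * hc2

lemma F_hasDeriv (a b c : ℝ) (hc0 : 0 < c) (hc2 : c^2 = a^2 - b^2)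
    (hpos : ∀ y, 0 < a + b * Real.cos y) (y : ℝ) :
    HasDerivAt (fun t => (t + (-2) * Real.arctan (b * Real.sin t / (a + c + b * Real.cos t))) / c)
      ((a + b * Real.cos y)⁻¹) y := by
  have hden_pos : 0 < a + c + b * Real.cos y := by have := hpos y; linarith
  have hnum : HasDerivAt (fun t => b * Real.sin t) (b * Real.cos y) y :=
    (Real.hasDerivAt_sin y).const_mul b
  have hden : HasDerivAt (fun t => a + c + b * Real.cos t) (-(b * Real.sin y)) y := by
    have h1 : HasDerivAt (fun t => b * Real.cos t) (b * (-Real.sin y)) y :=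
      (Real.hasDerivAt_cos y).const_mul b
    have := h1.const_add (a + c)
    refine this.congr_deriv (Eq.symm ?_)
    ring
  have hu := hnum.div hden (ne_of_gt hden_pos)
  have harc := hu.arctan
  have hall := ((hasDerivAt_id' (x := y)).add (harc.const_mul (-2))).div_const c
  refine hall.congr_deriv (Eq.symm ?_)
  exact (key_alg a b c (Real.sin y) (Real.cos y)
    (by nlinarith [Real.sin_sq_add_cos_sq y]) hc2 (hpos y) hden_pos hc0).symm

lemma integral_inv_shift (a b : ℝ) (hb : |b| < a) (n : ℕ) (hn : 0 < n) (x₀ : ℝ) :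
    ∫ x in (0:ℝ)..(2*π), (a + b * Real.cos ((n:ℝ) * (x - x₀)))⁻¹
      = 2 * π / Real.sqrt (a^2 - b^2) := by
  have ha : 0 < a := lt_of_le_of_lt (abs_nonneg b) hb
  have hab2 : 0 < a^2 - b^2 := by nlinarith [sq_abs b, abs_nonneg b]
  set c := Real.sqrt (a^2 - b^2) with hcdef
  have hc0 : 0 < c := Real.sqrt_pos.mpr hab2
  have hc2 : c^2 = a^2 - b^2 := Real.sq_sqrt hab2.le
  have hpos : ∀ y, 0 < a + b * Real.cos y := by
    intro y
    have h1 := Real.cos_le_one y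
    have h2 := Real.neg_one_le_cos y
    rcases le_or_gt 0 b with hb0 | hb0
    · have : b < a := lt_of_le_of_lt (le_abs_self b) hb
      nlinarith
    · have : -a < b := by have := neg_abs_le b; have := abs_lt.mp hb; linarith
      nlinarith
  have hnne : ((n:ℝ)) ≠ 0 := Nat.cast_ne_zero.mpr hn.ne'
  set F : ℝ → ℝ :=
    fun t => (t + (-2) * Real.arctan (b * Real.sin t / (a + c + b * Real.cos t))) / c with hFdef
  set G : ℝ → ℝ := fun x => (1/(n:ℝ)) * F ((n:ℝ) * (x - x₀)) with hGdef
  have hG : ∀ x, HasDerivAt G ((a + b * Real.cos ((n:ℝ) * (x - x₀)))⁻¹) x := by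
    intro x
    have h1 := F_hasDeriv a b c hc0 hc2 hpos ((n:ℝ) * (x - x₀))
    have hlin : HasDerivAt (fun x : ℝ => (n:ℝ) * (x - x₀)) (n:ℝ) x := by
      simpa using ((hasDerivAt_id x).sub_const x₀).const_mul (n:ℝ)
    have := (h1.comp x hlin).const_mul (1/(n:ℝ))
    refine this.congr_deriv (Eq.symm ?_)
    field_simp
  have hcont : Continuous fun x => (a + b * Real.cos ((n:ℝ) * (x - x₀)))⁻¹ := by
    apply Continuous.inv₀
    · continuity
    · intro x; exact ne_of_gt (hpos _)
  have hFTC := intervalIntegral.integral_eq_sub_of_hasDerivAt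
    (f := G) (fun x _ => hG x) (hcont.intervalIntegrable 0 (2*π))
  rw [hFTC]
  have harg : (n:ℝ) * (2*π - x₀) = (n:ℝ) * (0 - x₀) + (n:ℝ) * (2*π) := by ring
  have hsin : Real.sin ((n:ℝ) * (2*π - x₀)) = Real.sin ((n:ℝ) * (0 - x₀)) := by
    rw [harg, Real.sin_add_nat_mul_two_pi]
  have hcos : Real.cos ((n:ℝ) * (2*π - x₀)) = Real.cos ((n:ℝ) * (0 - x₀)) := by
    rw [harg, Real.cos_add_nat_mul_two_pi]
  simp only [hGdef, hFdef, hsin, hcos]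
  field_simp
  ring


lemma arith_m (m lam k A X : ℝ) (hX : k^2 * X = lam)
    (hFI : 0 = m + 2*lam*(X + A) + (-k^2)*(X + A)^2)
    (hval : X^2 - A^2 = 1) : m = -k^2 := by
  linear_combination (-1) * hFI + (2*X + 2*A) * hX + (-(k^2)) * hval

lemma arith_val2 (lam k A X : ℝ) (hX : k^2 * X = lam) (hval : X^2 - A^2 = 1) :
    lam^2 = k^4*(1 + A^2) := by
  linear_combination (-(k^2*X + lam)) * hX + k^4 * hval

lemma sqrt_one_of (S : ℝ) (hS : 0 ≤ S) (h : 2*π/S = 2*π) : S = 1 := by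
  have hπ : 0 < π := Real.pi_pos
  rcases eq_or_lt_of_le hS with h0 | h0
  · rw [← h0, div_zero] at h; linarith
  · rw [div_eq_iff (ne_of_gt h0)] at h
    have h2 : 2*π*1 = 2*π*S := by linarith
    exact (mul_left_cancel₀ (by positivity) h2).symm

lemma sq_sub_pos_of_abs_lt (b a : ℝ) (h : |b| < a) : 0 < a^2 - b^2 := by
  nlinarith [sq_abs b, abs_nonneg b]

lemma lam_gt_ksq (lam k A : ℝ) (hk : 0 < k) (hA : 0 < A) (hlam : 0 < lam)
    (hval2 : lam^2 = k^4*(1 + A^2)) : k^2 < lam := by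
  nlinarith [pow_pos hk 2, mul_pos (mul_pos (pow_pos hk 2) (pow_pos hk 2)) (mul_pos hA hA)]

lemma final_form (lam k A c0 : ℝ) (hk : 0 < k) (hA : 0 < A) (hlamA : 0 < lam/k^2 - A)
    (hc : -1 ≤ c0) (hc' : c0 ≤ 1) :
    (lam/k^2 + A*c0)⁻¹ = k^2/(lam + k^2*A*c0) := by
  have hk2 : (0:ℝ) < k^2 := pow_pos hk 2
  have h1 : 0 < lam + k^2*A*c0 := by
    have e : k^2*(lam/k^2 - A) = lam - k^2*A := by field_simp
    nlinarith [mul_pos hk2 hlamA, mul_nonneg (mul_pos hk2 hA).le (by linarith : (0:ℝ) ≤ c0 + 1)]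
  have h2 : 0 < lam/k^2 + A*c0 := by
    have e : (lam/k^2 + A*c0)*k^2 = lam + k^2*A*c0 := by field_simp
    nlinarith
  rw [inv_eq_one_div, div_eq_div_iff (ne_of_gt h2) (ne_of_gt h1)]
  field_simp

set_option maxHeartbeats 2000000 in
/-- Classification of constrained critical points with constant mass aspect:
any `2π`-periodic `C²` solution of `h'' = m e^{2h} + λ e^{h}` with
`∫₀^{2π} e^{h} = 2π` is either identically zero (and then `λ = −m`), or
`m = −n²` for a positive integer `n`, `λ > n²`, and
`e^{h(x)} = n²/(λ + √(λ²−n⁴) cos(n(x−x₀)))` for some `x₀`. -/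
theorem critical_points_constant_mass_aspect (m lam : ℝ) (h : ℝ → ℝ)
    (hreg : ContDiff ℝ 2 h) (hper : Function.Periodic h (2 * π))
    (hnorm : (∫ x in (0:ℝ)..(2 * π), Real.exp (h x)) = 2 * π)
    (heq : ∀ x, deriv (deriv h) x = m * Real.exp (2 * h x) + lam * Real.exp (h x)) :
    ((∀ x, h x = 0) ∧ lam = -m) ∨
      ∃ (n : ℕ) (x₀ : ℝ), 0 < n ∧ m = -(n : ℝ) ^ 2 ∧ (n : ℝ) ^ 2 < lam ∧
        ∀ x, Real.exp (h x) =
          (n : ℝ) ^ 2 /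
            (lam + Real.sqrt (lam ^ 2 - (n : ℝ) ^ 4) * Real.cos (n * (x - x₀))) := by
  have hpi := Real.pi_pos
  obtain ⟨hd1, hd1'⟩ : Differentiable ℝ h ∧ Differentiable ℝ (deriv h) := by
    have h2 : ContDiff ℝ (1 + 1) h := by norm_num; exact hreg
    have := contDiff_succ_iff_deriv.mp h2
    exact ⟨this.1, this.2.2.differentiable one_ne_zero⟩
  set h1 : ℝ → ℝ := deriv h with hh1def
  have hh : ∀ x, HasDerivAt h (h1 x) x := fun x => (hd1 x).hasDerivAt
  have hh1 : ∀ x, HasDerivAt h1 (m * Real.exp (2 * h x) + lam * Real.exp (h x)) x := by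
    intro x
    exact heq x ▸ (hd1' x).hasDerivAt
  -- the energy first integral
  set E : ℝ → ℝ := fun x => h1 x ^ 2 - m * Real.exp (2 * h x) - 2 * lam * Real.exp (h x)
    with hEdef
  have hE : ∀ x, HasDerivAt E 0 x := by
    intro x
    have d1 : HasDerivAt (fun t => h1 t ^ 2)
        ((2:ℕ) * h1 x ^ 1 * (m * Real.exp (2 * h x) + lam * Real.exp (h x))) x := (hh1 x).pow 2
    have d2 : HasDerivAt (fun t => Real.exp (2 * h t)) (Real.exp (2 * h x) * (2 * h1 x)) x :=
      ((hh x).const_mul 2).exp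
    have d3 : HasDerivAt (fun t => Real.exp (h t)) (Real.exp (h x) * h1 x) x := (hh x).exp
    have := (d1.sub (d2.const_mul m)).sub (d3.const_mul (2 * lam))
    refine this.congr_deriv (Eq.symm ?_)
    push_cast
    ring
  set C : ℝ := E 0 with hCdef
  have hfirst : ∀ x, h1 x ^ 2 = m * Real.exp (2 * h x) + 2 * lam * Real.exp (h x) + C := by
    intro x
    have h' := const_of_hasDerivAt_zero hE x
    simp only [hEdef] at h'
    simp only [hCdef, hEdef]
    linarith [h']
  -- the function w = e^{-h}
  set w : ℝ → ℝ := fun x => Real.exp (-h x) with hwdef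
  set w1 : ℝ → ℝ := fun x => -h1 x * Real.exp (-h x) with hw1def
  have hwpos : ∀ x, 0 < w x := fun x => Real.exp_pos _
  have hw : ∀ x, HasDerivAt w (w1 x) x := by
    intro x
    have := ((hh x).neg).exp
    refine this.congr_deriv (Eq.symm ?_)
    simp only [hw1def, Pi.neg_apply]
    ring
  have hw1 : ∀ x, HasDerivAt w1 (lam + C * w x) x := by
    intro x
    have := ((hh1 x).neg).mul (((hh x).neg).exp)
    refine this.congr_deriv (Eq.symm ?_)
    have e2 : Real.exp (h x) * Real.exp (-h x) = 1 := by
      rw [← Real.exp_add]; simp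
    simp only [hwdef, Pi.neg_apply]
    linear_combination (-(Real.exp (-h x))) * hfirst x + (-lam) * e2
  have hwfirst : ∀ x, w1 x ^ 2 = m + 2 * lam * w x + C * w x ^ 2 := by
    intro x
    have hE2 : Real.exp (2 * h x) * Real.exp (-h x) ^ 2 = 1 := by
      rw [sq, ← Real.exp_add, ← Real.exp_add,
        show 2 * h x + (-h x + -h x) = 0 by ring, Real.exp_zero]
    have hE3 : Real.exp (h x) * Real.exp (-h x) ^ 2 = Real.exp (-h x) := by
      rw [sq, ← Real.exp_add, ← Real.exp_add, show h x + (-h x + -h x) = -h x by ring]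
    simp only [hw1def, hwdef]
    linear_combination (Real.exp (-h x))^2 * hfirst x + m * hE2 + 2 * lam * hE3
  -- periodicity
  have hh1per : Function.Periodic h1 (2 * π) := periodic_deriv' h hper
  have hwper : Function.Periodic w (2 * π) := fun x => by simp only [hwdef]; rw [hper x]
  have hw1per : Function.Periodic w1 (2 * π) := fun x => by
    simp only [hw1def]; rw [hper x, hh1per x]
  have hexp : ∀ x, Real.exp (h x) = (w x)⁻¹ := fun x => by
    simp only [hwdef]; rw [Real.exp_neg, inv_inv]
  -- the constant case
  have hconst_case : (∀ x, w x = w 0) → ((∀ x, h x = 0) ∧ lam = -m) := by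
    intro hwc
    have hhc : ∀ x, h x = h 0 := by
      intro x
      have hx := hwc x
      simp only [hwdef] at hx
      have := Real.exp_injective hx
      linarith
    have hint : (∫ x in (0:ℝ)..(2*π), Real.exp (h x))
        = ∫ x in (0:ℝ)..(2*π), Real.exp (h 0) :=
      intervalIntegral.integral_congr (fun x _ => by rw [hhc x])
    rw [hint] at hnorm
    simp [intervalIntegral.integral_const, smul_eq_mul] at hnorm
    have hexp1 : Real.exp (h 0) = 1 := by
      have h2pine : (2 * π) ≠ 0 := by positivity
      rw [hnorm, Real.exp_zero]
    have h00 : h 0 = 0 := Real.exp_injective (hexp1.trans Real.exp_zero.symm)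
    have hall0 : ∀ x, h x = 0 := fun x => by rw [hhc x, h00]
    refine ⟨hall0, ?_⟩
    have hzero : h = fun _ => 0 := funext hall0
    have hh1zero : h1 = fun _ => (0:ℝ) := by
      rw [hh1def, hzero]
      funext t
      simp
    have hd0 : deriv h1 0 = 0 := by rw [hh1zero]; simp
    have h0 := heq 0
    rw [hd0, h00] at h0
    simp at h0
    linarith
  -- trichotomy on C
  rcases lt_trichotomy C 0 with hC | hC | hC
  · -- C < 0 : oscillatory case
    set k : ℝ := Real.sqrt (-C) with hkdef
    have hk : 0 < k := Real.sqrt_pos.mpr (by linarith)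
    have hk2 : k ^ 2 = -C := Real.sq_sqrt (by linarith)
    have hkne : k ≠ 0 := ne_of_gt hk
    have hk2ne : k ^ 2 ≠ 0 := by positivity
    have hCk : C = -k^2 := by linarith
    set v : ℝ → ℝ := fun x => w x - lam / k^2 with hvdef
    have hv : ∀ x, HasDerivAt v (w1 x) x := fun x => (hw x).sub_const _
    have hv1 : ∀ x, HasDerivAt w1 (-(k^2) * v x) x := by
      intro x
      convert hw1 x using 1
      simp only [hvdef]
      rw [hCk]
      field_simp
      ring
    have hform : ∀ x, v x = v 0 * Real.cos (k*x) + (w1 0 / k) * Real.sin (k*x) :=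
      harmonic_ode hk hv hv1
    set B : ℝ := w1 0 / k with hBdef
    have hvfun : v = fun x => v 0 * Real.cos (k*x) + B * Real.sin (k*x) := funext hform
    have hw1form : ∀ x, w1 x = -(v 0 * k) * Real.sin (k*x) + (B*k) * Real.cos (k*x) := by
      intro x
      have d : HasDerivAt (fun x => v 0 * Real.cos (k*x) + B * Real.sin (k*x))
          (-(v 0 * k) * Real.sin (k*x) + (B*k) * Real.cos (k*x)) x := by
        have := ((cos_kt k x).const_mul (v 0)).add ((sin_kt k x).const_mul B)
        refine this.congr_deriv (Eq.symm ?_)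
        ring
      have d2 : HasDerivAt v (-(v 0 * k) * Real.sin (k*x) + (B*k) * Real.cos (k*x)) x :=
        d.congr_of_eventuallyEq (Filter.Eventually.of_forall fun y => hform y)
      exact (hv x).unique d2
    have hvper : Function.Periodic v (2*π) := fun x => by
      simp only [hvdef]; rw [hwper x]
    by_cases hz : v 0 = 0 ∧ w1 0 = 0
    · -- constant solution
      left
      apply hconst_case
      intro x
      have hB0 : B = 0 := by rw [hBdef, hz.2]; simp
      have h1' := hform x
      rw [hz.1, hB0] at h1'
      simp at h1'
      have h0v := hz.1
      simp only [hvdef] at h1' h0v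
      linarith
    · -- genuine oscillation
      have hA2pos : 0 < v 0 ^ 2 + B ^ 2 := by
        rcases (not_and_or.mp hz) with hne | hne
        · have : 0 < v 0 ^ 2 := by positivity
          linarith [sq_nonneg B]
        · have hBne : B ≠ 0 := by
            simp only [hBdef]
            exact div_ne_zero hne hkne
          have : 0 < B ^ 2 := by positivity
          linarith [sq_nonneg (v 0)]
      set A : ℝ := Real.sqrt (v 0 ^ 2 + B ^ 2) with hAdef
      have hA : 0 < A := Real.sqrt_pos.mpr hA2pos
      have hAne : A ≠ 0 := ne_of_gt hA
      have hA2 : A ^ 2 = v 0 ^ 2 + B ^ 2 := Real.sq_sqrt hA2pos.le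
      -- periodicity forces k to be a positive integer
      have hv2π : v (2*π) = v 0 := by simpa using hvper 0
      have hw12π : w1 (2*π) = w1 0 := by simpa using hw1per 0
      have eq1 : v 0 * Real.cos (k*(2*π)) + B * Real.sin (k*(2*π)) = v 0 :=
        (hform (2*π)).symm.trans hv2π
      have eq2' : -(v 0) * Real.sin (k*(2*π)) + B * Real.cos (k*(2*π)) = B := by
        have e := (hw1form (2*π)).symm.trans hw12π
        have hB' : w1 0 = B * k := by simp only [hBdef]; field_simp
        rw [hB'] at e
        apply mul_right_cancel₀ hkne
        linear_combination e
      have keyzero : (1 - Real.cos (k*(2*π))) * (v 0 ^ 2 + B ^ 2) = 0 := by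
        linear_combination (-(v 0)) * eq1 + (-B) * eq2'
      have hcos1 : Real.cos (k*(2*π)) = 1 := by
        rcases mul_eq_zero.mp keyzero with hc | hc
        · linarith
        · exact absurd hc (ne_of_gt hA2pos)
      obtain ⟨j, hj⟩ := (Real.cos_eq_one_iff _).mp hcos1
      have hjk : (j:ℝ) = k := by
        have h2pine : (2*π) ≠ 0 := by positivity
        have : (j:ℝ) * (2*π) = k * (2*π) := hj
        exact mul_right_cancel₀ h2pine this
      have hjpos : 0 < j := by
        have : (0:ℝ) < (j:ℝ) := by rw [hjk]; exact hk
        exact_mod_cast this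
      set n : ℕ := j.toNat with hndef
      have hnpos : 0 < n := by omega
      have hnj : (n:ℤ) = j := Int.toNat_of_nonneg hjpos.le
      have hnk : (n:ℝ) = k := by
        rw [← hjk]
        exact_mod_cast hnj
      -- phase
      have habs : |v 0| ≤ A := by
        rw [← Real.sqrt_sq_eq_abs]
        apply Real.sqrt_le_sqrt
        linarith [sq_nonneg B]
      have hub : v 0 / A ≤ 1 := (div_le_one hA).mpr (le_trans (le_abs_self _) habs)
      have hlb : -1 ≤ v 0 / A := by
        rw [neg_le, ← neg_div]
        exact (div_le_one hA).mpr (le_trans (le_abs_self _) (by rwa [abs_neg])) 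
      have hx2 : 1 - (v 0 / A)^2 = (B / A)^2 := by
        field_simp
        linarith [hA2]
      set θ : ℝ := if 0 ≤ B then Real.arccos (v 0 / A) else -Real.arccos (v 0 / A) with hθdef
      have hcθ : Real.cos θ = v 0 / A := by
        simp only [hθdef]
        split_ifs
        · exact Real.cos_arccos hlb hub
        · rw [Real.cos_neg]; exact Real.cos_arccos hlb hub
      have hsθ : Real.sin θ = B / A := by
        simp only [hθdef]
        split_ifs with hB0
        · rw [Real.sin_arccos, hx2, Real.sqrt_sq (div_nonneg hB0 hA.le)]
        · rw [Real.sin_neg, Real.sin_arccos, hx2, Real.sqrt_sq_eq_abs, abs_div,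
            abs_of_pos hA, abs_of_neg (lt_of_not_ge hB0)]
          ring
      set x₀ : ℝ := θ / k with hx₀def
      have hkx₀ : k * x₀ = θ := by simp only [hx₀def]; field_simp
      have hw_form : ∀ x, w x = lam / k^2 + A * Real.cos (k*(x - x₀)) := by
        intro x
        have harg : k*(x - x₀) = k*x - θ := by rw [mul_sub, hkx₀]
        rw [harg, Real.cos_sub, hcθ, hsθ]
        have hfx := hform x
        simp only [hvdef] at hfx
        have hexpand : A * (Real.cos (k*x) * (v 0 / A) + Real.sin (k*x) * (B / A))
            = v 0 * Real.cos (k*x) + B * Real.sin (k*x) := by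
          field_simp
        rw [hexpand]
        linarith [hfx]
      -- positivity of w gives lam/k² > A
      have hlamA : 0 < lam / k^2 - A := by
        have hwp := hwpos (x₀ + π/k)
        rw [hw_form (x₀ + π/k), show k*((x₀ + π/k) - x₀) = π by field_simp; ring, Real.cos_pi] at hwp
        linarith
      have hlampos : 0 < lam := by
        have : 0 < lam / k^2 := by linarith
        have := (div_pos_iff.mp this)
        rcases this with ⟨h1', _⟩ | ⟨_, h2'⟩
        · exact h1'
        · linarith [hk2ne, sq_nonneg k, pow_pos hk 2]
      -- first integral at x₀
      have hw1x₀ : w1 x₀ = 0 := by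
        rw [hw1form x₀, hkx₀, hcθ, hsθ]
        field_simp
        ring
      have hwx₀ : w x₀ = lam / k^2 + A := by
        rw [hw_form x₀]
        simp
      have hFI : 0 = m + 2*lam*(lam/k^2 + A) + C*(lam/k^2 + A)^2 := by
        have := hwfirst x₀
        rw [hw1x₀, hwx₀] at this
        linarith [this]
      -- normalization
      have hexp_eq : ∀ x, Real.exp (h x) = (lam/k^2 + A * Real.cos ((n:ℝ)*(x - x₀)))⁻¹ := by
        intro x
        rw [hexp x, hw_form x, hnk]
      have hcong : (∫ x in (0:ℝ)..(2*π), Real.exp (h x))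
          = ∫ x in (0:ℝ)..(2*π), (lam/k^2 + A * Real.cos ((n:ℝ)*(x - x₀)))⁻¹ :=
        intervalIntegral.integral_congr (fun x _ => by rw [hexp_eq x])
      rw [hcong] at hnorm
      have hbA : |A| < lam/k^2 := by rw [abs_of_pos hA]; linarith
      rw [integral_inv_shift (lam/k^2) A hbA n hnpos x₀] at hnorm
      have hs1 : Real.sqrt ((lam/k^2)^2 - A^2) = 1 :=
        sqrt_one_of _ (Real.sqrt_nonneg _) hnorm
      have hargpos : 0 < (lam/k^2)^2 - A^2 := sq_sub_pos_of_abs_lt A (lam/k^2) hbA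
      have hval : (lam/k^2)^2 - A^2 = 1 := by
        have hsq := Real.sq_sqrt hargpos.le
        rw [hs1, one_pow] at hsq
        exact hsq.symm
      have hX : k^2 * (lam/k^2) = lam := by field_simp
      have hval2 : lam^2 = k^4*(1 + A^2) := arith_val2 lam k A (lam/k^2) hX hval
      have hm : m = -k^2 := by
        rw [hCk] at hFI
        exact arith_m m lam k A (lam/k^2) hX hFI hval
      have hsqrt : Real.sqrt (lam^2 - k^4) = k^2 * A := by
        rw [show lam^2 - k^4 = (k^2*A)^2 by linear_combination hval2, Real.sqrt_sq (by positivity)]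
      right
      refine ⟨n, x₀, hnpos, ?_, ?_, ?_⟩
      · rw [hnk]; exact hm
      · rw [hnk]
        exact lam_gt_ksq lam k A hk hA hlampos hval2
      · intro x
        rw [hnk, hsqrt, hexp_eq x, hnk]
        exact final_form lam k A (Real.cos (k*(x - x₀))) hk hA hlamA
          (Real.neg_one_le_cos _) (Real.cos_le_one _)
  · -- C = 0 : w'' = lam
    left
    apply hconst_case
    have hw1lin : ∀ x, w1 x = w1 0 + lam * x := by
      intro x
      have hq : ∀ t, HasDerivAt (fun s => w1 s - lam * s) 0 t := by
        intro t
        have := (hw1 t).sub ((hasDerivAt_id t).const_mul lam)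
        refine this.congr_deriv (Eq.symm ?_)
        rw [hC]
        ring
      have := const_of_hasDerivAt_zero hq x
      linarith [this]
    have hlam0 : lam = 0 := by
      have e := hw1per 0
      rw [hw1lin (0 + 2*π)] at e
      have hz : lam * (2*π) = 0 := by linarith [e]
      rcases mul_eq_zero.mp hz with hc | hc
      · exact hc
      · exact absurd hc (by positivity)
    have hwlin : ∀ x, w x = w 0 + w1 0 * x := by
      intro x
      have hq : ∀ t, HasDerivAt (fun s => w s - w1 0 * s) 0 t := by
        intro t
        have := (hw t).sub ((hasDerivAt_id t).const_mul (w1 0))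
        refine this.congr_deriv (Eq.symm ?_)
        rw [hw1lin t, hlam0]
        ring
      have := const_of_hasDerivAt_zero hq x
      linarith [this]
    have hw10 : w1 0 = 0 := by
      have e := hwper 0
      rw [hwlin (0 + 2*π)] at e
      have hz : w1 0 * (2*π) = 0 := by linarith [e]
      rcases mul_eq_zero.mp hz with hc | hc
      · exact hc
      · exact absurd hc (by positivity)
    intro x
    rw [hwlin x, hw10]
    ring
  · -- C > 0 : exponential case
    left
    apply hconst_case
    set r : ℝ := Real.sqrt C with hrdef
    have hr : 0 < r := Real.sqrt_pos.mpr hC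
    have hr2 : r ^ 2 = C := Real.sq_sqrt hC.le
    have hrne : r ≠ 0 := ne_of_gt hr
    have hCne : C ≠ 0 := ne_of_gt hC
    set v : ℝ → ℝ := fun x => w x + lam / C with hvdef
    have hv : ∀ x, HasDerivAt v (w1 x) x := fun x => (hw x).add_const _
    have hvper : Function.Periodic v (2*π) := fun x => by simp only [hvdef]; rw [hwper x]
    have hp : ∀ x, HasDerivAt (fun t => w1 t + r * v t) (r * (w1 x + r * v x)) x := by
      intro x
      have := (hw1 x).add ((hv x).const_mul r)
      refine this.congr_deriv (Eq.symm ?_)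
      simp only [hvdef]
      rw [← hr2]
      field_simp
      ring
    have hq : ∀ x, HasDerivAt (fun t => w1 t - r * v t) (-r * (w1 x - r * v x)) x := by
      intro x
      have := (hw1 x).sub ((hv x).const_mul r)
      refine this.congr_deriv (Eq.symm ?_)
      simp only [hvdef]
      rw [← hr2]
      field_simp
      ring
    have hpform : ∀ x, w1 x + r * v x = (w1 0 + r * v 0) * Real.exp (r * x) := exp_ode hp
    have hqform : ∀ x, w1 x - r * v x = (w1 0 - r * v 0) * Real.exp (-r * x) := exp_ode hq
    have hp0 : w1 0 + r * v 0 = 0 := by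
      have hper' : w1 (0 + 2*π) + r * v (0 + 2*π) = w1 0 + r * v 0 := by
        rw [hw1per 0, hvper 0]
      rw [hpform (0 + 2*π)] at hper'
      have hgt : (1:ℝ) < Real.exp (r * (0 + 2*π)) := by
        rw [← Real.exp_zero]
        apply Real.exp_lt_exp.mpr
        positivity
      have hz : (w1 0 + r * v 0) * (Real.exp (r * (0 + 2*π)) - 1) = 0 := by
        linear_combination hper'
      rcases mul_eq_zero.mp hz with hzz | hzz
      · exact hzz
      · linarith
    have hq0 : w1 0 - r * v 0 = 0 := by
      have hper' : w1 (0 + 2*π) - r * v (0 + 2*π) = w1 0 - r * v 0 := by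
        rw [hw1per 0, hvper 0]
      rw [hqform (0 + 2*π)] at hper'
      have hlt : Real.exp (-r * (0 + 2*π)) < 1 := by
        rw [← Real.exp_zero]
        apply Real.exp_lt_exp.mpr
        simp
        positivity
      have hz : (w1 0 - r * v 0) * (Real.exp (-r * (0 + 2*π)) - 1) = 0 := by
        linear_combination hper'
      rcases mul_eq_zero.mp hz with hzz | hzz
      · exact hzz
      · linarith
    have hv0 : ∀ x, v x = 0 := by
      intro x
      have h1' := hpform x
      have h2' := hqform x
      rw [hp0] at h1'
      rw [hq0] at h2'
      simp at h1' h2'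
      have hrv : r * v x = 0 := by linarith
      rcases mul_eq_zero.mp hrv with hzz | hzz
      · exact absurd hzz hrne
      · exact hzz
    intro x
    have := hv0 x
    have h0 := hv0 0
    simp only [hvdef] at this h0
    linarith
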